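/- Let ψ̃ be a smooth function on ℝ equal to 1 on [1/2, 2] and supported in [1/2 − 1/100, 2 + 1/100], and let φ̃ be a smooth function on ℝ supported in [−M, M] for some M ≥ 1. Define μ̃(ξ₁, η) = μ₂(ξ₁, η) − 1 and, for an integer ℓ with 2^{−ℓ} M < 1/4, define m_ℓ(ξ₁, η) = μ̃(ξ₁, 2^{−ℓ}η) ψ̃(ξ₁) φ̃(η). Then for every N ∈ ℕ there is a constant C_N (depending on N, ψ̃, φ̃ but not on ℓ) such that for all u, v ∈ ℝ, the inverse Fourier transform satisfies |m̌_ℓ(u, v)| ≤ C_N 2^{−ℓ} (1 + |v|)^{−2} (1 + |u|)^{−N}. -/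

import Mathlib

set_option maxHeartbeats 1000000

open MeasureTheory

/-- `μ₂(ξ₁,η) = ∫₀¹ sgn(αξ₁ + η) dα`. -/
noncomputable def mu2 (ξ η : ℝ) : ℝ :=
  ∫ α in Set.Icc (0:ℝ) 1, Real.sign (α * ξ + η)

/-- The inverse Fourier transform `m̌(u,v) = ∫_{ℝ²} e^{2πi(ξ₁u + ηv)} m(ξ₁,η) d(ξ₁,η)`
of a function `m` on `ℝ²`. -/
noncomputable def invFourier2 (m : ℝ × ℝ → ℝ) (u v : ℝ) : ℂ :=
  ∫ p : ℝ × ℝ,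
    Complex.exp (((2 * Real.pi * (p.1 * u + p.2 * v) : ℝ) : ℂ) * Complex.I) * (m p : ℂ)

section Aux

open Real SchwartzMap
open scoped FourierTransform

lemma ae_ne_real (t : ℝ) : ∀ᵐ α : ℝ, α ≠ t := by
  rw [ae_iff]
  simp only [ne_eq, not_not, Set.setOf_eq_eq_singleton]
  exact measure_singleton t

lemma mu2_eq {ξ η : ℝ} (hξ : 1/4 ≤ ξ) (hη : |η| < 1/4) :
    mu2 ξ η = 1 + 2 * min η 0 / ξ := by
  have hξ0 : (0:ℝ) < ξ := by linarith
  rcases le_or_gt 0 η with h0 | h0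
  · -- η ≥ 0 : integrand = 1 a.e.
    have hmin : min η 0 = 0 := min_eq_right h0
    have hcong : (fun α : ℝ => Real.sign (α * ξ + η))
        =ᵐ[volume.restrict (Set.Icc (0:ℝ) 1)] fun _ => (1:ℝ) := by
      rw [Filter.EventuallyEq, ae_restrict_iff' measurableSet_Icc]
      filter_upwards [ae_ne_real 0] with α hα hmem
      have : 0 < α * ξ + η := by
        have h1 : 0 < α := lt_of_le_of_ne hmem.1 (Ne.symm hα)
        nlinarith
      exact Real.sign_of_pos this
    rw [mu2, integral_congr_ae hcong]
    simp [Real.volume_Icc, hmin]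
  · -- η < 0
    set t : ℝ := -η / ξ with ht
    have ht0 : 0 < t := div_pos (by linarith) hξ0
    have htξ : t * ξ = -η := div_mul_cancel₀ _ (ne_of_gt hξ0)
    have ht1 : t < 1 := by
      rw [div_lt_one hξ0]
      have := abs_of_neg h0 ▸ hη
      linarith
    set g : ℝ → ℝ := fun α => if α ≤ t then (-1:ℝ) else 1 with hg
    have hfg : (fun α : ℝ => Real.sign (α * ξ + η)) =ᵐ[volume] g := by
      filter_upwards [ae_ne_real t] with α hα
      rcases lt_or_gt_of_ne hα with h | h
      · have hneg : α * ξ + η < 0 := by nlinarith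
        simp [hg, Real.sign_of_neg hneg, h.le]
      · have hpos : 0 < α * ξ + η := by nlinarith
        simp [hg, Real.sign_of_pos hpos, not_le.mpr h]
    have hIcc : Set.Icc (0:ℝ) 1 = Set.Icc 0 t ∪ Set.Ioc t 1 :=
      (Set.Icc_union_Ioc_eq_Icc ht0.le ht1.le).symm
    have hdisj : Disjoint (Set.Icc (0:ℝ) t) (Set.Ioc t 1) := by
      apply Set.disjoint_left.mpr
      rintro a ⟨_, h1⟩ ⟨h2, _⟩
      exact absurd h1 (not_le.mpr h2)
    have hint1 : IntegrableOn g (Set.Icc (0:ℝ) t) := by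
      refine (integrableOn_const (C := (-1:ℝ)) measure_Icc_lt_top.ne).congr_fun
        (fun α hα => ?_) measurableSet_Icc
      exact (if_pos hα.2).symm
    have hint2 : IntegrableOn g (Set.Ioc t (1:ℝ)) := by
      refine (integrableOn_const (C := (1:ℝ)) measure_Ioc_lt_top.ne).congr_fun
        (fun α hα => ?_) measurableSet_Ioc
      exact (if_neg (not_le.mpr hα.1)).symm
    have e1 : ∫ α in Set.Icc (0:ℝ) t, g α = -t := by
      rw [setIntegral_congr_fun measurableSet_Icc (fun α hα => if_pos hα.2)]
      simp [Real.volume_Icc, ht0.le]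
    have e2 : ∫ α in Set.Ioc t (1:ℝ), g α = 1 - t := by
      rw [setIntegral_congr_fun measurableSet_Ioc (fun α hα => if_neg (not_le.mpr hα.1))]
      simp [Real.volume_Ioc, ht1.le]
    have : mu2 ξ η = -t + (1 - t) := by
      rw [mu2, integral_congr_ae (Filter.EventuallyEq.restrict hfg), hIcc,
        setIntegral_union hdisj measurableSet_Ioc hint1 hint2, e1, e2]
    rw [this, min_eq_left h0.le, ht]
    field_simp
    ring

lemma bound_A (ψ : ℝ → ℝ)
    (hψ : ContDiff ℝ (⊤ : ℕ∞) ψ)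
    (hψsupp : tsupport ψ ⊆ Set.Icc (1/2 - 1/100 : ℝ) (2 + 1/100)) (N : ℕ) :
    ∃ C : ℝ, 0 < C ∧ ∀ u : ℝ,
      ‖∫ ξ : ℝ, Complex.exp (((2 * π * (ξ * u) : ℝ) : ℂ) * Complex.I)
          * ((ψ ξ / ξ : ℝ) : ℂ)‖ ≤ C / (1 + |u|) ^ N := by
  classical
  have hzero : ∀ ξ : ℝ, ξ < 49/100 → ψ ξ = 0 := by
    intro ξ hξ
    apply image_eq_zero_of_notMem_tsupport
    intro hmem
    have := (hψsupp hmem).1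
    norm_num at this
    linarith
  set Fc : ℝ → ℂ := fun ξ => ((ψ ξ / ξ : ℝ) : ℂ) with hFc
  have hFsmooth : ContDiff ℝ (⊤ : ℕ∞) Fc := by
    have hFr : ContDiff ℝ (⊤ : ℕ∞) (fun ξ : ℝ => ψ ξ / ξ) := by
      rw [contDiff_iff_contDiffAt]
      intro x
      rcases lt_or_ge x (49/100 : ℝ) with hx | hx
      · refine (contDiffAt_const (c := (0:ℝ))).congr_of_eventuallyEq ?_
        filter_upwards [Iio_mem_nhds hx] with y hy
        simp [hzero y hy]
      · exact hψ.contDiffAt.div contDiffAt_id (by positivity)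
    exact Complex.ofRealCLM.contDiff.comp hFr
  have hFcc : HasCompactSupport Fc := by
    apply HasCompactSupport.of_support_subset_isCompact
      (isCompact_Icc (a := (1/2 - 1/100 : ℝ)) (b := (2 + 1/100 : ℝ)))
    intro x hx
    apply hψsupp
    apply subset_tsupport
    intro h0
    apply hx
    simp [hFc, h0]
  have decay : ∀ k n : ℕ, ∃ C, ∀ x : ℝ, ‖x‖ ^ k * ‖iteratedFDeriv ℝ n Fc x‖ ≤ C := by
    intro k n
    have hic : Continuous fun x : ℝ => ‖x‖ ^ k * ‖iteratedFDeriv ℝ n Fc x‖ :=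
      (continuous_norm.pow k).mul
        ((hFsmooth.continuous_iteratedFDeriv (by exact_mod_cast le_top)).norm)
    have hsup : HasCompactSupport fun x : ℝ => ‖x‖ ^ k * ‖iteratedFDeriv ℝ n Fc x‖ :=
      ((hFcc.iteratedFDeriv n).norm).mul_left
    obtain ⟨C, hC⟩ := hsup.exists_bound_of_continuous hic
    refine ⟨C, fun x => ?_⟩
    have h := hC x
    rw [Real.norm_eq_abs, abs_of_nonneg (by positivity)] at h
    exact h
  set S : SchwartzMap ℝ ℂ := ⟨Fc, hFsmooth, decay⟩ with hS
  set T := SchwartzMap.fourierTransformCLM ℂ S with hT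
  set C₀ : ℝ := 2 ^ N *
    ((Finset.Iic ((N, 0) : ℕ × ℕ)).sup (fun m => SchwartzMap.seminorm ℂ m.1 m.2)) T + 1 with hC₀
  have hC₀pos : 0 < C₀ := by
    have := apply_nonneg ((Finset.Iic ((N, 0) : ℕ × ℕ)).sup
      (fun m => SchwartzMap.seminorm ℂ m.1 m.2 (E := ℝ) (F := ℂ))) T
    positivity
  refine ⟨C₀, hC₀pos, ?_⟩
  intro u
  have hId : (∫ ξ : ℝ, Complex.exp (((2 * π * (ξ * u) : ℝ) : ℂ) * Complex.I)
      * ((ψ ξ / ξ : ℝ) : ℂ)) = 𝓕 Fc (-u) := by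
    rw [Real.fourier_real_eq_integral_exp_smul]
    congr 1
    funext ξ
    rw [smul_eq_mul]
    congr 2
    push_cast
    ring
  rw [hId]
  have hTu : 𝓕 Fc (-u) = T (-u) := by
    rw [hT, SchwartzMap.fourierTransformCLM_apply]
    rfl
  rw [hTu]
  have hbd := SchwartzMap.one_add_le_sup_seminorm_apply (𝕜 := ℂ)
    (m := ((N, 0) : ℕ × ℕ)) le_rfl le_rfl T (-u)
  rw [norm_iteratedFDeriv_zero] at hbd
  have hnorm : ‖(-u : ℝ)‖ = |u| := by rw [Real.norm_eq_abs, abs_neg]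
  rw [hnorm] at hbd
  rw [le_div_iff₀ (by positivity)]
  calc ‖T (-u)‖ * (1 + |u|) ^ N = (1 + |u|) ^ N * ‖T (-u)‖ := by ring
    _ ≤ 2 ^ N * ((Finset.Iic ((N, 0) : ℕ × ℕ)).sup
        (fun m => SchwartzMap.seminorm ℂ m.1 m.2)) T := hbd
    _ ≤ C₀ := by rw [hC₀]; linarith

lemma bound_B (φ : ℝ → ℝ) (M : ℝ) (hM : 1 ≤ M)
    (hφ : ContDiff ℝ (⊤ : ℕ∞) φ) (hφsupp : tsupport φ ⊆ Set.Icc (-M) M) :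
    ∃ C : ℝ, 0 < C ∧ ∀ v : ℝ,
      ‖∫ η : ℝ, Complex.exp (((2 * π * (η * v) : ℝ) : ℂ) * Complex.I)
          * ((min η 0 * φ η : ℝ) : ℂ)‖ ≤ C / (1 + |v|) ^ 2 := by
  classical
  set a : ℝ := -(M + 1) with ha
  have ha0 : a < 0 := by rw [ha]; linarith
  have hφc : HasCompactSupport φ :=
    HasCompactSupport.of_support_subset_isCompact isCompact_Icc
      (Set.Subset.trans (subset_tsupport φ) hφsupp)
  have hφcont : Continuous φ := hφ.continuous
  have hφdiff : Differentiable ℝ φ := hφ.differentiable (by simp)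
  have hφ1 : ContDiff ℝ (⊤ : ℕ∞) (deriv φ) := (contDiff_infty_iff_deriv.mp hφ).2
  have hφ1diff : Differentiable ℝ (deriv φ) := hφ1.differentiable (by simp)
  have hφ2cont : Continuous (deriv (deriv φ)) := (contDiff_infty_iff_deriv.mp hφ1).2.continuous
  obtain ⟨Kφ, hKφ⟩ := hφc.exists_bound_of_continuous hφcont
  obtain ⟨K₁, hK₁⟩ := hφc.deriv.exists_bound_of_continuous hφ1.continuous
  obtain ⟨K₂, hK₂⟩ := hφc.deriv.deriv.exists_bound_of_continuous hφ2cont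
  have hKφ0 : 0 ≤ Kφ := le_trans (norm_nonneg _) (hKφ 0)
  have hK₁0 : 0 ≤ K₁ := le_trans (norm_nonneg _) (hK₁ 0)
  have hK₂0 : 0 ≤ K₂ := le_trans (norm_nonneg _) (hK₂ 0)
  have hanot : a ∉ tsupport φ := by
    intro h
    have := (hφsupp h).1
    rw [ha] at this
    linarith
  have hφa : φ a = 0 := image_eq_zero_of_notMem_tsupport hanot
  have hφ'a : deriv φ a = 0 := by
    by_contra h
    exact hanot (support_deriv_subset (by simpa using h))
  set K₀ : ℝ := (M + 1) * Kφ * (M + 1) with hK₀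
  set D : ℝ := |φ 0| + (2 * K₁ + (M + 1) * K₂) * (M + 1) with hD
  have hK₀0 : 0 ≤ K₀ := by positivity
  have hD0 : 0 ≤ D := by positivity
  refine ⟨4 * (K₀ + D) + 1, by positivity, ?_⟩
  intro v
  set E : ℝ → ℂ := fun η => Complex.exp (((2 * π * (η * v) : ℝ) : ℂ) * Complex.I) with hE
  set u₁ : ℝ → ℂ := fun η => ((η * φ η : ℝ) : ℂ) with hu₁def
  set u₂ : ℝ → ℂ := fun η => ((φ η + η * deriv φ η : ℝ) : ℂ) with hu₂def
  set u₃ : ℝ → ℂ := fun η => ((2 * deriv φ η + η * deriv (deriv φ) η : ℝ) : ℂ) with hu₃def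
  have hu₁ : ∀ x : ℝ, HasDerivAt u₁ (u₂ x) x := by
    intro x
    have h : HasDerivAt (fun η : ℝ => η * φ η) (φ x + x * deriv φ x) x := by
      have := (hasDerivAt_id' x).mul (hφdiff x).hasDerivAt
      exact this.congr_deriv (by ring)
    exact h.ofReal_comp
  have hu₂ : ∀ x : ℝ, HasDerivAt u₂ (u₃ x) x := by
    intro x
    have h : HasDerivAt (fun η : ℝ => φ η + η * deriv φ η)
        (2 * deriv φ x + x * deriv (deriv φ) x) x := by
      have h2 := ((hφdiff x).hasDerivAt).add ((hasDerivAt_id' x).mul (hφ1diff x).hasDerivAt)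
      exact h2.congr_deriv (by ring)
    exact h.ofReal_comp
  have hu₂cont : Continuous u₂ :=
    Complex.continuous_ofReal.comp (hφcont.add (continuous_id.mul hφ1.continuous))
  have hu₃cont : Continuous u₃ :=
    Complex.continuous_ofReal.comp
      ((continuous_const.mul hφ1.continuous).add (continuous_id.mul hφ2cont))
  have hEcont : Continuous E := by
    apply Complex.continuous_exp.comp
    apply Continuous.mul _ continuous_const
    exact Complex.continuous_ofReal.comp
      (continuous_const.mul (continuous_id.mul continuous_const))
  have hEnorm : ∀ η : ℝ, ‖E η‖ = 1 := by
    intro η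
    simp only [hE]
    exact Complex.norm_exp_ofReal_mul_I _
  -- representation as an interval integral
  have hrep : (∫ η : ℝ, E η * ((min η 0 * φ η : ℝ) : ℂ))
      = ∫ η in a..0, u₁ η * E η := by
    rw [intervalIntegral.integral_of_le ha0.le]
    rw [← setIntegral_eq_integral_of_forall_compl_eq_zero
      (s := Set.Ioc a (0:ℝ)) (f := fun η => E η * ((min η 0 * φ η : ℝ) : ℂ)) ?_]
    · refine setIntegral_congr_fun measurableSet_Ioc ?_
      intro η hη
      have hm : min η 0 = η := min_eq_left hη.2
      simp only [hu₁def, hm]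
      ring
    · intro η hη
      simp only [Set.mem_Ioc, not_and_or, not_lt, not_le] at hη
      rcases hη with h | h
      · have hnot : η ∉ tsupport φ := by
          intro hmem
          have := (hφsupp hmem).1
          rw [ha] at h
          linarith
        have : φ η = 0 := image_eq_zero_of_notMem_tsupport hnot
        simp [this]
      · have : min η 0 = 0 := min_eq_right h.le
        simp [this]
  rw [hrep]
  -- trivial bound
  have htriv : ‖∫ η in a..0, u₁ η * E η‖ ≤ K₀ := by
    have hb : ∀ x ∈ Set.uIoc a (0:ℝ), ‖u₁ x * E x‖ ≤ (M + 1) * Kφ := by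
      intro x hx
      rw [Set.uIoc_of_le ha0.le] at hx
      have hxabs : |x| ≤ M + 1 := by
        rw [abs_le]
        constructor
        · have := hx.1; rw [ha] at this; linarith
        · linarith [hx.2]
      rw [norm_mul, hEnorm, mul_one, hu₁def]
      calc ‖((x * φ x : ℝ) : ℂ)‖ = |x| * |φ x| := by
            rw [Complex.norm_real]; exact abs_mul _ _
        _ ≤ (M + 1) * Kφ := by
            apply mul_le_mul hxabs ?_ (abs_nonneg _) (by linarith)
            simpa using hKφ x
    have := intervalIntegral.norm_integral_le_of_norm_le_const hb
    have habs : |0 - a| = M + 1 := by rw [ha]; rw [abs_of_nonneg] <;> linarith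
    rw [habs] at this
    rw [hK₀]
    linarith
  rcases le_or_gt |v| 1 with hv | hv
  · -- small v
    have h4 : (1 + |v|) ^ 2 ≤ 4 := by nlinarith [abs_nonneg v]
    have hpos : (0:ℝ) < (1 + |v|) ^ 2 := by positivity
    rw [le_div_iff₀ hpos]
    nlinarith [abs_nonneg v]
  · -- large v : integration by parts
    have hv0 : v ≠ 0 := by
      intro h; rw [h] at hv; simp at hv; linarith
    set c : ℂ := ((2 * π * v : ℝ) : ℂ) * Complex.I with hc
    have hcne : c ≠ 0 := by
      rw [hc]
      apply mul_ne_zero _ Complex.I_ne_zero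
      simp only [ne_eq, Complex.ofReal_eq_zero]
      positivity
    have hcE : ∀ η : ℝ, ((2 * π * (η * v) : ℝ) : ℂ) * Complex.I = c * η := by
      intro η
      rw [hc]
      push_cast
      ring
    set w : ℝ → ℂ := fun η => Complex.exp (c * η) / c with hwdef
    have hw : ∀ η : ℝ, HasDerivAt w (E η) η := by
      intro η
      have h1 : HasDerivAt (fun z : ℂ => Complex.exp (c * z) / c)
          (Complex.exp (c * (η:ℂ))) (η:ℂ) := by
        have h0 : HasDerivAt (fun z : ℂ => c * z) c ((η:ℝ):ℂ) := by
          simpa using (hasDerivAt_id ((η:ℝ):ℂ)).const_mul c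
        have h2 := h0.cexp.div_const c
        simpa [mul_div_cancel_right₀ _ hcne] using h2
      have h3 := h1.comp_ofReal
      have : E η = Complex.exp (c * (η:ℂ)) := by rw [hE]; simp only; rw [hcE]
      rw [this]
      exact h3
    have hwE : ∀ η : ℝ, w η = E η / c := by
      intro η
      rw [hwdef, hE]
      simp only
      rw [hcE]
    have hcnorm : |v| ≤ ‖c‖ := by
      rw [hc]
      rw [norm_mul, Complex.norm_I, mul_one, Complex.norm_real]
      rw [Real.norm_eq_abs, abs_mul, abs_of_nonneg (by positivity : (0:ℝ) ≤ 2 * π)]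
      nlinarith [pi_gt_three, abs_nonneg v]
    have hcnorm0 : 0 < ‖c‖ := norm_pos_iff.mpr hcne
    -- first integration by parts
    have ibp1 : ∫ η in a..0, u₁ η * E η
        = u₁ 0 * w 0 - u₁ a * w a - ∫ η in a..0, u₂ η * w η := by
      apply intervalIntegral.integral_mul_deriv_eq_deriv_mul
        (fun x _ => hu₁ x) (fun x _ => hw x)
        (hu₂cont.intervalIntegrable _ _) (hEcont.intervalIntegrable _ _)
    have hu₁0 : u₁ 0 = 0 := by rw [hu₁def]; simp
    have hu₁a : u₁ a = 0 := by rw [hu₁def]; simp [hφa]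
    have e1 : ∫ η in a..0, u₂ η * w η = (∫ η in a..0, u₂ η * E η) / c := by
      rw [← intervalIntegral.integral_div]
      refine intervalIntegral.integral_congr ?_
      intro x _
      show u₂ x * w x = u₂ x * E x / c
      rw [hwE x]
      ring
    -- second integration by parts
    have ibp2 : ∫ η in a..0, u₂ η * E η
        = u₂ 0 * w 0 - u₂ a * w a - ∫ η in a..0, u₃ η * w η := by
      apply intervalIntegral.integral_mul_deriv_eq_deriv_mul
        (fun x _ => hu₂ x) (fun x _ => hw x)
        (hu₃cont.intervalIntegrable _ _) (hEcont.intervalIntegrable _ _)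
    have hu₂a : u₂ a = 0 := by rw [hu₂def]; simp [hφa, hφ'a]
    have e2 : ∫ η in a..0, u₃ η * w η = (∫ η in a..0, u₃ η * E η) / c := by
      rw [← intervalIntegral.integral_div]
      refine intervalIntegral.integral_congr ?_
      intro x _
      show u₃ x * w x = u₃ x * E x / c
      rw [hwE x]
      ring
    have hJ3 : ‖∫ η in a..0, u₃ η * E η‖ ≤ (2 * K₁ + (M + 1) * K₂) * (M + 1) := by
      have hb : ∀ x ∈ Set.uIoc a (0:ℝ), ‖u₃ x * E x‖ ≤ 2 * K₁ + (M + 1) * K₂ := by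
        intro x hx
        rw [Set.uIoc_of_le ha0.le] at hx
        have hxabs : |x| ≤ M + 1 := by
          rw [abs_le]
          constructor
          · have := hx.1; rw [ha] at this; linarith
          · linarith [hx.2]
        rw [norm_mul, hEnorm, mul_one, hu₃def]
        rw [Complex.norm_real, Real.norm_eq_abs]
        calc |2 * deriv φ x + x * deriv (deriv φ) x|
            ≤ |2 * deriv φ x| + |x * deriv (deriv φ) x| := abs_add_le _ _
          _ ≤ 2 * K₁ + (M + 1) * K₂ := by
              rw [abs_mul, abs_mul]
              have h1 := hK₁ x
              have h2 := hK₂ x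
              rw [Real.norm_eq_abs] at h1 h2
              have : |(2:ℝ)| = 2 := by norm_num
              rw [this]
              have hx2 : |x| * |deriv (deriv φ) x| ≤ (M + 1) * K₂ :=
                mul_le_mul hxabs h2 (abs_nonneg _) (by linarith)
              nlinarith [abs_nonneg (deriv φ x)]
      have := intervalIntegral.norm_integral_le_of_norm_le_const hb
      have habs : |0 - a| = M + 1 := by rw [ha]; rw [abs_of_nonneg] <;> linarith
      rw [habs] at this
      exact this
    -- assemble
    have hw0 : w 0 = 1 / c := by rw [hwdef]; simp
    have hu₂0 : u₂ 0 = ((φ 0 : ℝ) : ℂ) := by rw [hu₂def]; simp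
    have key : ∫ η in a..0, u₁ η * E η
        = -((((φ 0 : ℝ) : ℂ) * (1 / c) - (∫ η in a..0, u₃ η * E η) / c) / c) := by
      rw [ibp1, hu₁0, hu₁a, e1, ibp2, hu₂a, e2, hw0, hu₂0]
      ring
    rw [key]
    have hnorm : ‖-((((φ 0 : ℝ) : ℂ) * (1 / c) - (∫ η in a..0, u₃ η * E η) / c) / c)‖
        ≤ D / ‖c‖ ^ 2 := by
      rw [norm_neg, norm_div]
      have h1 : ‖(((φ 0 : ℝ) : ℂ) * (1 / c) - (∫ η in a..0, u₃ η * E η) / c)‖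
          ≤ |φ 0| / ‖c‖ + ((2 * K₁ + (M + 1) * K₂) * (M + 1)) / ‖c‖ := by
        refine (norm_sub_le _ _).trans ?_
        gcongr
        · rw [norm_mul, norm_div, norm_one, Complex.norm_real, Real.norm_eq_abs, mul_one_div]
        · rw [norm_div]
          gcongr
      refine ((div_le_div_iff_of_pos_right hcnorm0).mpr h1).trans ?_
      rw [← add_div, div_div, ← pow_two]

    have hv2 : v ^ 2 ≤ ‖c‖ ^ 2 := by
      have := sq_abs v
      nlinarith [hcnorm, abs_nonneg v]
    have h2 : D / ‖c‖ ^ 2 ≤ D / v ^ 2 := by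
      apply div_le_div_of_nonneg_left hD0 _ hv2
      positivity
    have h3 : D / v ^ 2 ≤ (4 * (K₀ + D) + 1) / (1 + |v|) ^ 2 := by
      rw [div_le_div_iff₀ (by positivity) (by positivity)]
      have hsq : (1 + |v|) ^ 2 ≤ 4 * v ^ 2 := by
        nlinarith [sq_abs v, abs_nonneg v]
      nlinarith [sq_abs v, abs_nonneg v, sq_nonneg v]
    linarith [hnorm, h2, h3]


/-- **Lemma (kernel estimate for the rescaled symbols `m_ℓ`).** Let `ψ̃` be smooth, equal
to `1` on `[1/2,2]` and supported in `[1/2 - 1/100, 2 + 1/100]`, and let `φ̃` be smooth and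
supported in `[-M,M]` with `M ≥ 1`. For an integer `ℓ` with `2^{-ℓ}M < 1/4` set
`m_ℓ(ξ₁,η) = (μ₂(ξ₁, 2^{-ℓ}η) - 1) ψ̃(ξ₁) φ̃(η)`. Then for every `N ∈ ℕ` there is a
constant `C_N` (independent of `ℓ`) such that
`|m̌_ℓ(u,v)| ≤ C_N 2^{-ℓ} (1+|v|)^{-2} (1+|u|)^{-N}` for all `u,v ∈ ℝ`. -/
theorem kernel_estimate_m_ell
    (ψ φ : ℝ → ℝ) (M : ℝ) (hM : 1 ≤ M)
    (hψ : ContDiff ℝ (⊤ : ℕ∞) ψ)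
    (hψone : ∀ x ∈ Set.Icc (1/2 : ℝ) 2, ψ x = 1)
    (hψsupp : tsupport ψ ⊆ Set.Icc (1/2 - 1/100 : ℝ) (2 + 1/100))
    (hφ : ContDiff ℝ (⊤ : ℕ∞) φ)
    (hφsupp : tsupport φ ⊆ Set.Icc (-M) M) :
    ∀ N : ℕ, ∃ C : ℝ, 0 < C ∧ ∀ ℓ : ℤ, (2:ℝ) ^ (-ℓ) * M < 1/4 → ∀ u v : ℝ,
      ‖invFourier2
          (fun p => (mu2 p.1 ((2:ℝ) ^ (-ℓ) * p.2) - 1) * ψ p.1 * φ p.2) u v‖ ≤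
        C * (2:ℝ) ^ (-ℓ) * ((1 + |v|) ^ 2)⁻¹ * ((1 + |u|) ^ N)⁻¹ := by
  intro N
  obtain ⟨CA, hCA0, hCA⟩ := bound_A ψ hψ hψsupp N
  obtain ⟨CB, hCB0, hCB⟩ := bound_B φ M hM hφ hφsupp
  refine ⟨2 * CA * CB, by positivity, ?_⟩
  intro ℓ hℓ u v
  set c : ℝ := (2:ℝ) ^ (-ℓ) with hcdef
  have hc0 : 0 < c := zpow_pos (by norm_num) _
  -- pointwise identity for the symbol
  have hkey : ∀ p : ℝ × ℝ, (mu2 p.1 (c * p.2) - 1) * ψ p.1 * φ p.2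
      = (2 * c) * ((ψ p.1 / p.1) * (min p.2 0 * φ p.2)) := by
    rintro ⟨ξ, η⟩
    by_cases hψ0 : ψ ξ = 0
    · simp [hψ0]
    by_cases hφ0 : φ η = 0
    · simp [hφ0]
    have hξmem : ξ ∈ tsupport ψ := subset_tsupport ψ (by simp [hψ0])
    have hξlo : (49/100 : ℝ) ≤ ξ := by
      have := (hψsupp hξmem).1
      norm_num at this
      linarith
    have hηmem : η ∈ tsupport φ := subset_tsupport φ (by simp [hφ0])
    have hηabs : |η| ≤ M := abs_le.mpr ⟨(hφsupp hηmem).1, (hφsupp hηmem).2⟩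
    have habs : |c * η| < 1/4 := by
      rw [abs_mul, abs_of_pos hc0]
      calc c * |η| ≤ c * M := mul_le_mul_of_nonneg_left hηabs hc0.le
        _ < 1/4 := hℓ
    have hmu := mu2_eq (show (1:ℝ)/4 ≤ ξ by linarith) habs
    have hmin : min (c * η) 0 = c * min η 0 := by
      rcases le_or_gt η 0 with h | h
      · rw [min_eq_left h, min_eq_left (by nlinarith : c * η ≤ 0)]
      · rw [min_eq_right h.le, min_eq_right (by nlinarith : (0:ℝ) ≤ c * η), mul_zero]
    have hξne : ξ ≠ 0 := by intro h; rw [h] at hξlo; norm_num at hξlo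
    rw [hmu, hmin]
    field_simp
    ring
  -- factor the Fourier integral
  have hfact : invFourier2 (fun p => (mu2 p.1 (c * p.2) - 1) * ψ p.1 * φ p.2) u v
      = (((2 * c : ℝ)) : ℂ) *
        ((∫ ξ : ℝ, Complex.exp (((2 * π * (ξ * u) : ℝ) : ℂ) * Complex.I)
            * ((ψ ξ / ξ : ℝ) : ℂ)) *
         (∫ η : ℝ, Complex.exp (((2 * π * (η * v) : ℝ) : ℂ) * Complex.I)
            * ((min η 0 * φ η : ℝ) : ℂ))) := by
    rw [invFourier2]
    have hpt : ∀ p : ℝ × ℝ,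
        Complex.exp (((2 * π * (p.1 * u + p.2 * v) : ℝ) : ℂ) * Complex.I)
            * (((mu2 p.1 (c * p.2) - 1) * ψ p.1 * φ p.2 : ℝ) : ℂ)
        = (((2 * c : ℝ)) : ℂ) *
          ((Complex.exp (((2 * π * (p.1 * u) : ℝ) : ℂ) * Complex.I)
              * ((ψ p.1 / p.1 : ℝ) : ℂ)) *
           (Complex.exp (((2 * π * (p.2 * v) : ℝ) : ℂ) * Complex.I)
              * ((min p.2 0 * φ p.2 : ℝ) : ℂ))) := by
      intro p
      rw [hkey p]
      have hexp : (((2 * π * (p.1 * u + p.2 * v) : ℝ) : ℂ) * Complex.I)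
          = ((2 * π * (p.1 * u) : ℝ) : ℂ) * Complex.I
            + ((2 * π * (p.2 * v) : ℝ) : ℂ) * Complex.I := by
        push_cast
        ring
      rw [hexp, Complex.exp_add]
      push_cast
      ring
    rw [integral_congr_ae (Filter.Eventually.of_forall hpt)]
    rw [integral_const_mul]
    congr 1
    rw [MeasureTheory.Measure.volume_eq_prod]
    exact integral_prod_mul
      (fun ξ : ℝ => Complex.exp (((2 * π * (ξ * u) : ℝ) : ℂ) * Complex.I)
        * ((ψ ξ / ξ : ℝ) : ℂ))
      (fun η : ℝ => Complex.exp (((2 * π * (η * v) : ℝ) : ℂ) * Complex.I)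
        * ((min η 0 * φ η : ℝ) : ℂ))
  rw [hfact]
  rw [norm_mul, norm_mul, Complex.norm_real, Real.norm_eq_abs,
    abs_of_pos (by positivity : (0:ℝ) < 2 * c)]
  have h1 := hCA u
  have h2 := hCB v
  calc 2 * c * (‖∫ ξ : ℝ, Complex.exp (((2 * π * (ξ * u) : ℝ) : ℂ) * Complex.I)
            * ((ψ ξ / ξ : ℝ) : ℂ)‖ *
          ‖∫ η : ℝ, Complex.exp (((2 * π * (η * v) : ℝ) : ℂ) * Complex.I)
            * ((min η 0 * φ η : ℝ) : ℂ)‖)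
      ≤ 2 * c * ((CA / (1 + |u|) ^ N) * (CB / (1 + |v|) ^ 2)) := by
        gcongr
    _ = 2 * CA * CB * c * ((1 + |v|) ^ 2)⁻¹ * ((1 + |u|) ^ N)⁻¹ := by
        rw [div_eq_mul_inv, div_eq_mul_inv]
        ring

end Aux
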